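/- For all nonzero vectors a, b in R^3 with a ≠ b, the quantity |a−b| − ||a|−|b|| is comparable (up to absolute constants) to (|a||b|/|a−b|)·θ(a,b)^2. -/

import Mathlib

open InnerProductGeometry

/-- For all nonzero vectors `a, b` in `ℝ³` with `a ≠ b`, the quantity
`|a−b| − ||a|−|b||` is comparable, up to absolute constants, to
`(|a||b|/|a−b|) · θ(a,b)²`, where `θ(a,b)` is the angle between `a` and `b`. -/
theorem abs_sub_sub_comparable_angle_sq :
    ∃ c C : ℝ, 0 < c ∧ 0 < C ∧
      ∀ a b : EuclideanSpace ℝ (Fin 3), a ≠ 0 → b ≠ 0 → a ≠ b →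
        c * (‖a‖ * ‖b‖ / ‖a - b‖ * angle a b ^ 2) ≤ ‖a - b‖ - |‖a‖ - ‖b‖| ∧
        ‖a - b‖ - |‖a‖ - ‖b‖| ≤ C * (‖a‖ * ‖b‖ / ‖a - b‖ * angle a b ^ 2) := by
  refine ⟨2 / Real.pi ^ 2, 1, by positivity, one_pos, fun a b ha hb hab => ?_⟩
  have hx : 0 < ‖a‖ := norm_pos_iff.mpr ha
  have hy : 0 < ‖b‖ := norm_pos_iff.mpr hb
  have hs : 0 < ‖a - b‖ := norm_pos_iff.mpr (sub_ne_zero.mpr hab)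
  set x := ‖a‖
  set y := ‖b‖
  set s := ‖a - b‖
  set θ := angle a b with hθdef
  have hθ0 : 0 ≤ θ := angle_nonneg a b
  have hθπ : θ ≤ Real.pi := angle_le_pi a b
  have hinner : (inner ℝ a b : ℝ) = x * y * Real.cos θ := by
    rw [hθdef, cos_angle]
    field_simp
    rfl
  have h1 : s ^ 2 = x ^ 2 - 2 * (inner ℝ a b : ℝ) + y ^ 2 := norm_sub_sq_real a b
  have hkey : (s - |x - y|) * (s + |x - y|) = 2 * (x * y) * (1 - Real.cos θ) := by
    have h2 : |x - y| ^ 2 = (x - y) ^ 2 := sq_abs _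
    nlinarith [h1, h2, hinner]
  have habs : |x - y| ≤ s := abs_norm_sub_norm_le a b
  have habs0 : 0 ≤ |x - y| := abs_nonneg _
  have hcosu : Real.cos θ ≤ 1 - 2 / Real.pi ^ 2 * θ ^ 2 :=
    Real.cos_le_one_sub_mul_cos_sq (by rw [abs_of_nonneg hθ0]; exact hθπ)
  have hcosl : 1 - θ ^ 2 / 2 ≤ Real.cos θ := Real.one_sub_sq_div_two_le_cos
  have hπ : 0 < 2 / Real.pi ^ 2 := by positivity
  constructor
  · rw [show 2 / Real.pi ^ 2 * (x * y / s * θ ^ 2)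
        = 2 / Real.pi ^ 2 * (x * y * θ ^ 2) / s by ring, div_le_iff₀ hs]
    nlinarith [hkey, mul_pos hx hy, sq_nonneg θ, sub_nonneg.2 habs,
      mul_le_mul_of_nonneg_left hcosu (mul_pos hx hy).le,
      mul_le_mul_of_nonneg_left habs (sub_nonneg.2 habs)]
  · rw [one_mul, show x * y / s * θ ^ 2 = x * y * θ ^ 2 / s by ring,
      le_div_iff₀ hs]
    nlinarith [hkey, mul_pos hx hy, sq_nonneg θ, sub_nonneg.2 habs,
      mul_le_mul_of_nonneg_left hcosl (mul_pos hx hy).le,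
      mul_le_mul_of_nonneg_left habs0 (sub_nonneg.2 habs)]
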